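/- For the Undecided-State Dynamics, let c = (c_1,...,c_k) be the current color configuration with q undecided nodes and set δ = q − n/2. Then the conditional expectations after one round satisfy: (i) E[C_i' | c] = (1 + (2δ + c_i)/n)·c_i = c_i·(c_i + 2q)/n for every color i; (ii) E[Q' | c] = (q² + Σ_{i≠j} c_i c_j)/n; and consequently (iii) E[Q' − n/2 | c] = (1/n)·(2δ² − Σ_{j=1}^k c_j²). -/

import Mathlib

open Finset

/-- A state of the Undecided-State Dynamics: each of the `n` nodes is either
undecided (`none`) or supports one of `k` colors. -/
abbrev Config (n k : ℕ) := Fin n → Option (Fin k)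

/-- Number of nodes supporting color `i`. -/
def colorCount {n k : ℕ} (σ : Config n k) (i : Fin k) : ℕ :=
  (Finset.univ.filter fun v => σ v = some i).card

/-- Number of undecided nodes. -/
def undecidedCount {n k : ℕ} (σ : Config n k) : ℕ :=
  (Finset.univ.filter fun v => σ v = none).card

/-- Update rule for one node: an undecided node adopts the sampled state; a colored
node keeps its color iff the sampled node does not support a different color. -/
def updateNode {k : ℕ} : Option (Fin k) → Option (Fin k) → Option (Fin k)
  | none, s => s
  | some c, none => some c
  | some c, some c' => if c' = c then some c else none

/-- Apply one synchronous round given the samples `s` of all nodes. -/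
def applySample {n k : ℕ} (σ : Config n k) (s : Fin n → Fin n) : Config n k :=
  fun v => updateNode (σ v) (σ (s v))

/-- One round of the Undecided-State Dynamics: every node independently samples a
uniformly random node. -/
noncomputable def step {n k : ℕ} [NeZero n] (σ : Config n k) : PMF (Config n k) :=
  (PMF.uniformOfFintype (Fin n → Fin n)).map (applySample σ)

/-- Distribution of the configuration after `t` rounds, starting from `σ`. -/
noncomputable def process {n k : ℕ} [NeZero n] (σ : Config n k) : ℕ → PMF (Config n k)
  | 0 => PMF.pure σ
  | t + 1 => (process σ t).bind step

/-- Joint distribution of the whole trajectory of the first `t` rounds (most recent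
configuration first). -/
noncomputable def pathProcess {n k : ℕ} [NeZero n] (σ : Config n k) :
    ℕ → PMF (List (Config n k))
  | 0 => PMF.pure [σ]
  | t + 1 => (pathProcess σ t).bind fun l => (step l.headI).map fun τ => τ :: l

/-- Probability of an event under a PMF. -/
noncomputable def pr {α : Type*} (p : PMF α) (E : Set α) : ENNReal := p.toOuterMeasure E

/-- Expected value of `f` after one round of the dynamics starting from `σ`. -/
noncomputable def expv {n k : ℕ} [NeZero n] (σ : Config n k) (f : Config n k → ℝ) : ℝ :=
  ∑ τ : Config n k, ((step σ) τ).toReal * f τ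

/-- Size `c₁` of the plurality (largest) color class. -/
def plur {n k : ℕ} (σ : Config n k) : ℕ := Finset.univ.sup (colorCount σ)

/-- Monochromatic distance `md(c) = ∑ᵢ (cᵢ/c₁)²`. -/
noncomputable def md {n k : ℕ} (σ : Config n k) : ℝ :=
  ∑ i : Fin k, ((colorCount σ i : ℝ) / (plur σ : ℝ)) ^ 2

/-- `R(c) = (∑ᵢ cᵢ)/c₁ = (n − q)/c₁`. -/
noncomputable def Rval {n k : ℕ} (σ : Config n k) : ℝ :=
  ((n : ℝ) - (undecidedCount σ : ℝ)) / (plur σ : ℝ)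

/-- The process has converged: all `n` nodes support one and the same color. -/
def mono {n k : ℕ} (σ : Config n k) : Prop := ∃ i : Fin k, ∀ v : Fin n, σ v = some i

section Aux
variable {n k : ℕ} [NeZero n]

set_option linter.unusedSectionVars false

lemma expv_eq (σ : Config n k) (f : Config n k → ℝ) :
    expv σ f = (∑ s : Fin n → Fin n, f (applySample σ s)) /
      (Fintype.card (Fin n → Fin n) : ℝ) := by
  have hstep : ∀ τ : Config n k, ((step σ) τ).toReal =
      ∑ s : Fin n → Fin n, if τ = applySample σ s
        then ((Fintype.card (Fin n → Fin n) : ℝ))⁻¹ else 0 := by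
    intro τ
    rw [step, PMF.map_apply, tsum_fintype, ENNReal.toReal_sum]
    · refine Finset.sum_congr rfl fun s _ => ?_
      split_ifs
      · simp [PMF.uniformOfFintype_apply, ENNReal.toReal_inv]
      · simp
    · intro s _
      split_ifs
      · simp [PMF.uniformOfFintype_apply]
      · simp
  unfold expv
  simp_rw [hstep, Finset.sum_mul, ite_mul, zero_mul]
  rw [Finset.sum_comm]
  simp_rw [Finset.sum_ite_eq' Finset.univ, Finset.mem_univ, if_true]
  rw [div_eq_inv_mul, Finset.mul_sum]

lemma sum_eval (v : Fin n) (g : Fin n → ℝ) :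
    (n : ℝ) * ∑ s : Fin n → Fin n, g (s v) =
      (Fintype.card (Fin n → Fin n) : ℝ) * ∑ u : Fin n, g u := by
  have h1 : ∑ s : Fin n → Fin n, g (s v) =
      ∑ p : Fin n × ({j : Fin n // j ≠ v} → Fin n), g p.1 :=
    Fintype.sum_equiv (Equiv.piSplitAt v (fun _ => Fin n)) _ _ (fun s => rfl)
  have h2 : (Fintype.card (Fin n → Fin n) : ℕ) =
      n * Fintype.card ({j : Fin n // j ≠ v} → Fin n) := by
    rw [Fintype.card_congr (Equiv.piSplitAt v (fun _ => Fin n)), Fintype.card_prod,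
      Fintype.card_fin]
  rw [h1, Fintype.sum_prod_type]
  simp only [Finset.sum_const, Finset.card_univ, nsmul_eq_mul]
  rw [h2]
  push_cast
  rw [Finset.mul_sum, Finset.mul_sum]
  refine Finset.sum_congr rfl fun u _ => by ring


lemma indic_update (a b : Option (Fin k)) (i : Fin k) :
    (if updateNode a b = some i then (1:ℝ) else 0) =
      (if a = none then (1:ℝ) else 0) * (if b = some i then 1 else 0)
      + (if a = some i then 1 else 0) *
          ((if b = none then 1 else 0) + (if b = some i then 1 else 0)) := by
  rcases a with _ | c <;> rcases b with _ | c' <;>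
    simp only [updateNode] <;> split_ifs <;> simp_all

lemma sum_indic_none (σ : Config n k) :
    ∑ v : Fin n, (if σ v = none then (1:ℝ) else 0) = (undecidedCount σ : ℝ) := by
  rw [Finset.sum_boole]; rfl

lemma sum_indic_color (σ : Config n k) (i : Fin k) :
    ∑ v : Fin n, (if σ v = some i then (1:ℝ) else 0) = (colorCount σ i : ℝ) := by
  rw [Finset.sum_boole]; rfl

lemma expv_colorCount (σ : Config n k) (i : Fin k) :
    expv σ (fun τ => (colorCount τ i : ℝ)) =
      (colorCount σ i : ℝ) * ((colorCount σ i : ℝ) + 2 * (undecidedCount σ : ℝ)) / n := by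
  have hn : (n : ℝ) ≠ 0 := Nat.cast_ne_zero.mpr (NeZero.ne n)
  have hN : (Fintype.card (Fin n → Fin n) : ℝ) ≠ 0 := by
    exact_mod_cast Fintype.card_ne_zero
  have hcc : ∀ τ : Config n k, (colorCount τ i : ℝ) =
      ∑ v : Fin n, (if τ v = some i then (1:ℝ) else 0) := fun τ => (sum_indic_color τ i).symm
  rw [expv_eq]
  simp_rw [hcc]
  rw [Finset.sum_comm]
  have key : ∀ v : Fin n,
      ∑ s : Fin n → Fin n, (if applySample σ s v = some i then (1:ℝ) else 0) =
        (Fintype.card (Fin n → Fin n) : ℝ) *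
          (∑ u : Fin n, (if updateNode (σ v) (σ u) = some i then (1:ℝ) else 0)) / n := by
    intro v
    have h := sum_eval (n := n) v (fun u => if updateNode (σ v) (σ u) = some i then (1:ℝ) else 0)
    simp only [applySample]
    rw [eq_div_iff hn]
    exact (mul_comm _ _).trans h
  simp_rw [key]
  have hinner : ∀ v : Fin n,
      ∑ u : Fin n, (if updateNode (σ v) (σ u) = some i then (1:ℝ) else 0) =
        (if σ v = none then (1:ℝ) else 0) * (colorCount σ i : ℝ)
        + (if σ v = some i then 1 else 0) * ((undecidedCount σ : ℝ) + (colorCount σ i : ℝ)) := by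
    intro v
    simp_rw [indic_update (σ v) _ i]
    rw [Finset.sum_add_distrib, ← Finset.mul_sum, ← Finset.mul_sum, Finset.sum_add_distrib,
      sum_indic_none, sum_indic_color]
  simp_rw [hinner, mul_div_assoc]
  rw [← Finset.mul_sum, ← Finset.sum_div, Finset.sum_add_distrib, ← Finset.sum_mul,
    ← Finset.sum_mul, sum_indic_none, sum_indic_color]
  field_simp
  ring

lemma undecided_eq_real (τ : Config n k) :
    (undecidedCount τ : ℝ) = n - ∑ i : Fin k, (colorCount τ i : ℝ) := by
  have : (undecidedCount τ : ℝ) + ∑ i : Fin k, (colorCount τ i : ℝ) = n := by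
    rw [← sum_indic_none τ]
    simp_rw [← sum_indic_color τ]
    rw [Finset.sum_comm, ← Finset.sum_add_distrib]
    have : ∀ v : Fin n, ((if τ v = none then (1:ℝ) else 0)
        + ∑ i : Fin k, (if τ v = some i then (1:ℝ) else 0)) = 1 := by
      intro v
      rcases h : τ v with _ | c
      · simp
      · simp only [h, reduceCtorEq, if_false, zero_add, Option.some.injEq]
        rw [Finset.sum_ite_eq Finset.univ c (fun _ => (1:ℝ))]
        simp
    simp_rw [this]
    simp
  linarith

lemma expv_sub_const (σ : Config n k) (f : Config n k → ℝ) (a : ℝ) :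
    expv σ (fun τ => f τ - a) = expv σ f - a := by
  have hN : (Fintype.card (Fin n → Fin n) : ℝ) ≠ 0 := by
    exact_mod_cast Fintype.card_ne_zero
  rw [expv_eq, expv_eq, Finset.sum_sub_distrib, Finset.sum_const, Finset.card_univ,
    nsmul_eq_mul, sub_div, mul_div_cancel_left₀ _ hN]

lemma expv_undecided (σ : Config n k) :
    expv σ (fun τ => (undecidedCount τ : ℝ)) =
      n - ∑ i : Fin k, expv σ (fun τ => (colorCount τ i : ℝ)) := by
  have hN : (Fintype.card (Fin n → Fin n) : ℝ) ≠ 0 := by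
    exact_mod_cast Fintype.card_ne_zero
  simp_rw [expv_eq, undecided_eq_real]
  rw [Finset.sum_sub_distrib, Finset.sum_const, Finset.card_univ, nsmul_eq_mul, sub_div,
    mul_div_cancel_left₀ _ hN, Finset.sum_comm, Finset.sum_div]

end Aux

/-- One-round conditional expectations for the Undecided-State
Dynamics: with `δ = q - n/2`, (i) `E[Cᵢ' | c] = (1 + (2δ + cᵢ)/n) cᵢ
= cᵢ (cᵢ + 2q)/n` for every color `i`; (ii) `E[Q' | c] = (q² + ∑_{i≠j} cᵢ cⱼ)/n`;
(iii) `E[Q' - n/2 | c] = (1/n)(2δ² - ∑ⱼ cⱼ²)`. -/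
theorem one_round_expectations (n k : ℕ) [NeZero n] (σ : Config n k) :
    (∀ i : Fin k,
      expv σ (fun τ => (colorCount τ i : ℝ)) =
        (1 + (2 * ((undecidedCount σ : ℝ) - (n : ℝ) / 2) + (colorCount σ i : ℝ)) / n) *
          (colorCount σ i : ℝ) ∧
      expv σ (fun τ => (colorCount τ i : ℝ)) =
        (colorCount σ i : ℝ) * ((colorCount σ i : ℝ) + 2 * (undecidedCount σ : ℝ)) / n) ∧
    expv σ (fun τ => (undecidedCount τ : ℝ)) =
      ((undecidedCount σ : ℝ) ^ 2 +
        ∑ i : Fin k, ∑ j ∈ Finset.univ.erase i, (colorCount σ i : ℝ) * (colorCount σ j : ℝ)) / n ∧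
    expv σ (fun τ => (undecidedCount τ : ℝ) - (n : ℝ) / 2) =
      (1 / n) * (2 * ((undecidedCount σ : ℝ) - (n : ℝ) / 2) ^ 2 -
        ∑ j : Fin k, (colorCount σ j : ℝ) ^ 2) := by
  have hn : (n : ℝ) ≠ 0 := Nat.cast_ne_zero.mpr (NeZero.ne n)
  have hq := undecided_eq_real σ
  have hsum : ∑ i : Fin k, (colorCount σ i : ℝ) * ((colorCount σ i : ℝ)
        + 2 * (undecidedCount σ : ℝ)) =
      (∑ i : Fin k, (colorCount σ i : ℝ) ^ 2)
        + (∑ i : Fin k, (colorCount σ i : ℝ)) * (2 * (undecidedCount σ : ℝ)) := by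
    simp_rw [mul_add, ← sq]
    rw [Finset.sum_add_distrib, ← Finset.sum_mul]
  refine ⟨fun i => ⟨?_, expv_colorCount σ i⟩, ?_, ?_⟩
  · rw [expv_colorCount σ i]; field_simp; ring
  · rw [expv_undecided σ]
    simp_rw [expv_colorCount σ, ← Finset.mul_sum,
      Finset.sum_erase_eq_sub (Finset.mem_univ _), ← Finset.sum_div, hsum]
    have hex : ∑ i : Fin k, (colorCount σ i : ℝ) *
        ((∑ j : Fin k, (colorCount σ j : ℝ)) - (colorCount σ i : ℝ)) =
        (∑ i : Fin k, (colorCount σ i : ℝ)) * (∑ j : Fin k, (colorCount σ j : ℝ))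
          - ∑ i : Fin k, (colorCount σ i : ℝ) ^ 2 := by
      simp_rw [mul_sub, ← sq]
      rw [Finset.sum_sub_distrib, ← Finset.sum_mul]
      ring
    rw [hex, hq]
    field_simp
    ring
  · rw [expv_sub_const, expv_undecided σ]
    simp_rw [expv_colorCount σ]
    rw [← Finset.sum_div, hsum, hq]
    field_simp
    ring
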